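/- For every integer k ≥ 0 there exists a constant C > 0 such that for infinitely many integers n there exists an n-vertex ordered graph (G, ≺) ordered along a Hamiltonian path which is (2k+1)-non-crossing and contains no induced path of size greater than C · (log n)^{1/(k+1)}. -/

import Mathlib

/-- `(G, ≺)` (on `Fin n` with its natural order) is ordered along a Hamiltonian path:
consecutive vertices are adjacent. -/
def OrderedAlongHamPath {n : ℕ} (G : SimpleGraph (Fin n)) : Prop :=
  ∀ i : Fin n, ∀ h : (i : ℕ) + 1 < n, G.Adj i ⟨(i : ℕ) + 1, h⟩

/-- An induced path of size `s`: `s` distinct vertices, adjacent iff consecutive. -/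
def IsInducedPath {n : ℕ} (G : SimpleGraph (Fin n)) {s : ℕ} (v : Fin s → Fin n) : Prop :=
  Function.Injective v ∧
    ∀ i j : Fin s, G.Adj (v i) (v j) ↔ ((i : ℕ) + 1 = (j : ℕ) ∨ (j : ℕ) + 1 = (i : ℕ))

/-- An increasing induced path. -/
def IsIncreasingInducedPath {n : ℕ} (G : SimpleGraph (Fin n)) {s : ℕ} (v : Fin s → Fin n) : Prop :=
  StrictMono v ∧
    ∀ i j : Fin s, G.Adj (v i) (v j) ↔ ((i : ℕ) + 1 = (j : ℕ) ∨ (j : ℕ) + 1 = (i : ℕ))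

/-- A set of edges is non-crossing. -/
def NonCrossing {n : ℕ} (F : Set (Sym2 (Fin n))) : Prop :=
  ¬ ∃ a b c d : Fin n, a < c ∧ c < b ∧ b < d ∧ s(a, b) ∈ F ∧ s(c, d) ∈ F

/-- `(G, ≺)` is `k`-non-crossing: the edge set partitions into `k` non-crossing sets. -/
def KNonCrossing {n : ℕ} (G : SimpleGraph (Fin n)) (k : ℕ) : Prop :=
  ∃ E : Fin k → Set (Sym2 (Fin n)),
    (⋃ i, E i) = G.edgeSet ∧ (∀ i j, i ≠ j → Disjoint (E i) (E j)) ∧ ∀ i, NonCrossing (E i)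

/-- An interval of the ordering. -/
def IsInterval {n : ℕ} (I : Set (Fin n)) : Prop :=
  ∀ a ∈ I, ∀ b ∈ I, ∀ x : Fin n, a ≤ x → x ≤ b → x ∈ I

/-- The gap of `u` towards `I` is at least `g`. -/
def HasGapAtLeast {n : ℕ} (G : SimpleGraph (Fin n)) (u : Fin n) (I : Set (Fin n)) (g : ℕ) : Prop :=
  ∃ a b : Fin n, a ∈ I ∧ b ∈ I ∧ a ≤ b ∧ g ≤ (b : ℕ) - (a : ℕ) ∧
    ∀ x ∈ Set.Icc a b, ¬ G.Adj u x

/-- The edges of `F` crossing the cut just after position `t`. -/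
def CutAt {n : ℕ} (F : Set (Sym2 (Fin n))) (t : Fin n) : Set (Sym2 (Fin n)) :=
  {e | e ∈ F ∧ ∃ a b : Fin n, e = s(a, b) ∧ a ≤ t ∧ t < b}

/-- The set of edges `F` (on ordered vertex set `Fin n`) has cutwidth at most `c`. -/
def CutwidthLE {n : ℕ} (F : Set (Sym2 (Fin n))) (c : ℕ) : Prop :=
  ∀ t : Fin n, (CutAt F t).ncard ≤ c

/-- for every `k ≥ 0` there is `C > 0` such that for infinitely many `n`
there is an `n`-vertex ordered graph along a Hamiltonian path that is
`(2k+1)`-non-crossing and has no induced path of size greater than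
`C * (log n)^(1/(k+1))` (logs base 2). -/


def NAdj (h k H x y : ℕ) : Prop :=
  x ≠ y ∧ ∃ c j, c ≤ k ∧ 1 ≤ j ∧ j * h ^ c ≤ H ∧ (x - y) + (y - x) < 2 ^ (j * h ^ c) ∧
    ((2 ^ (j * h ^ c) ∣ x ∧ 2 ^ ((j - 1) * h ^ c) ∣ y) ∨
     (2 ^ (j * h ^ c) ∣ y ∧ 2 ^ ((j - 1) * h ^ c) ∣ x))

lemma NAdj.nsymm {h k H x y : ℕ} (hxy : NAdj h k H x y) : NAdj h k H y x := by
  obtain ⟨hne, c, j, hc, hj, hjH, hd, hdisj⟩ := hxy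
  exact ⟨hne.symm, c, j, hc, hj, hjH, by omega, hdisj.symm⟩

lemma NAdj.ne {h k H x y : ℕ} (hxy : NAdj h k H x y) : x ≠ y := hxy.1

lemma mult_dist {D u w : ℕ} (hD : 0 < D) (hu : D ∣ u) (hw : D ∣ w) (hne : u ≠ w) :
    D ≤ (u - w) + (w - u) := by
  obtain ⟨a, rfl⟩ := hu
  obtain ⟨b, rfl⟩ := hw
  have hab : a ≠ b := by rintro rfl; exact hne rfl
  rcases lt_or_ge a b with hlt | hge
  · have : D * a + D ≤ D * b := by nlinarith
    omega
  · have hlt : b < a := by omega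
    have : D * b + D ≤ D * a := by nlinarith
    omega

lemma noJump {h k H x y w ℓ : ℕ} (hxy : NAdj h k H x y) (h1 : x < w) (h2 : w < y)
    (hw : 2 ^ ℓ ∣ w) (hx : ¬ 2 ^ ℓ ∣ x) (hy : ¬ 2 ^ ℓ ∣ y) : False := by
  obtain ⟨hne, c, j, hc, hj, hjH, hd, hdisj⟩ := hxy
  set D := j * h ^ c with hD
  rcases le_or_gt ℓ D with hlD | hDl
  · have hdvd : (2:ℕ) ^ ℓ ∣ 2 ^ D := pow_dvd_pow 2 hlD
    rcases hdisj with ⟨h1', _⟩ | ⟨h1', _⟩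
    · exact hx (hdvd.trans h1')
    · exact hy (hdvd.trans h1')
  · have hwD : (2:ℕ) ^ D ∣ w := (pow_dvd_pow 2 hDl.le).trans hw
    have hpos : 0 < (2:ℕ) ^ D := Nat.pow_pos (by norm_num)
    rcases hdisj with ⟨h1', _⟩ | ⟨h1', _⟩
    · have hne' : x ≠ w := by rintro rfl; exact hx hw
      have := mult_dist hpos h1' hwD hne'
      omega
    · have hne' : y ≠ w := by rintro rfl; exact hy hw
      have := mult_dist hpos h1' hwD hne'
      omega


lemma closeEdge {h k H x y c0 ℓ : ℕ} (hh : 2 ≤ h) (hH : H ≤ h ^ (c0+1))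
    (hdl : h ^ c0 ∣ ℓ) (hxy : NAdj h k H x y) (hy : ¬ 2 ^ ℓ ∣ y)
    (hx0 : 0 < x) (hxH : x < 2 ^ H) (hyH : y < 2 ^ H) :
    (x - y) + (y - x) < 2 ^ ℓ := by
  obtain ⟨hne, c, j, hc, hj, hjH, hd, hdisj⟩ := hxy
  rcases le_or_gt c c0 with hcc | hcc
  · have hcl : h ^ c ∣ ℓ := (pow_dvd_pow h hcc).trans hdl
    have hsplit : j * h ^ c = (j-1) * h ^ c + h ^ c := by
      rcases j with _ | j'
      · omega
      · simp [Nat.succ_sub_one, Nat.succ_mul]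
    rcases hdisj with ⟨hdx, hdy⟩ | ⟨hdy, hdx⟩
    · -- x is the center
      have hD' : ¬ (ℓ ≤ (j-1) * h ^ c) := by
        intro hl
        exact hy ((pow_dvd_pow 2 hl).trans hdy)
      push_neg at hD'
      have hdvd2 : h ^ c ∣ ℓ - (j-1) * h ^ c :=
        Nat.dvd_sub hcl (Dvd.intro_left _ rfl)
      have hge : h ^ c ≤ ℓ - (j-1) * h ^ c := Nat.le_of_dvd (by omega) hdvd2
      have hDle : j * h ^ c ≤ ℓ := by omega
      calc (x - y) + (y - x) < 2 ^ (j * h ^ c) := hd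
        _ ≤ 2 ^ ℓ := Nat.pow_le_pow_right (by norm_num) hDle
    · -- y is the center
      have hD : ¬ (ℓ ≤ j * h ^ c) := by
        intro hl
        exact hy ((pow_dvd_pow 2 hl).trans hdy)
      push_neg at hD
      calc (x - y) + (y - x) < 2 ^ (j * h ^ c) := hd
        _ ≤ 2 ^ ℓ := Nat.pow_le_pow_right (by norm_num) hD.le
  · -- impossible: such big chains have no edges among vertices in (0, 2^H)
    exfalso
    have h1 : h ^ (c0+1) ≤ h ^ c := Nat.pow_le_pow_right (by omega) hcc
    have hDH : H ≤ j * h ^ c := le_trans (le_trans hH h1) (Nat.le_mul_of_pos_left _ hj)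
    have h2H : (2:ℕ) ^ H ≤ 2 ^ (j * h ^ c) := Nat.pow_le_pow_right (by norm_num) hDH
    rcases hdisj with ⟨hdx, _⟩ | ⟨hdy, _⟩
    · have := Nat.le_of_dvd hx0 hdx; omega
    · have hy0 : 0 < y := by
        rcases Nat.eq_zero_or_pos y with rfl | hy0
        · exact absurd (dvd_zero _) hy
        · exact hy0
      have := Nat.le_of_dvd hy0 hdy; omega

lemma domin {h k H c0 m z y : ℕ} (hh : 1 ≤ h) (hc0 : c0 ≤ k) (hdm : h ^ c0 ∣ m)
    (hm1 : h ^ c0 ≤ m) (hmH : m ≤ H) (hz : 2 ^ m ∣ z) (hy : 2 ^ (m - h ^ c0) ∣ y)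
    (hne : z ≠ y) (hd : (z - y) + (y - z) < 2 ^ m) : NAdj h k H z y := by
  have hγ : 0 < h ^ c0 := Nat.pow_pos hh
  refine ⟨hne, c0, m / h ^ c0, hc0, ?_, ?_, ?_, Or.inl ⟨?_, ?_⟩⟩
  · exact (Nat.one_le_div_iff hγ).mpr hm1
  · rw [Nat.div_mul_cancel hdm]; exact hmH
  · rw [Nat.div_mul_cancel hdm]; exact hd
  · rw [Nat.div_mul_cancel hdm]; exact hz
  · rwa [Nat.sub_mul, Nat.div_mul_cancel hdm, one_mul]

lemma blockIso {h k H L w p q : ℕ} (hw : 2 ^ L ∣ w) (hLH : L ≤ H)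
    (hp0 : 0 < p) (hpL : p < 2 ^ L) (hq0 : 0 < q) (hqL : q < 2 ^ L) :
    NAdj h k H (w + p) (w + q) ↔ NAdj h k L p q := by
  constructor
  · rintro ⟨hne, c, j, hc, hj, hjH, hd, hdisj⟩
    have hpq : p ≠ q := by omega
    have hDL : j * h ^ c ≤ L := by
      by_contra hDL
      push_neg at hDL
      have h2L : (2:ℕ) ^ L ∣ 2 ^ (j * h ^ c) := pow_dvd_pow 2 hDL.le
      rcases hdisj with ⟨hdx, _⟩ | ⟨hdx, _⟩
      · have : (2:ℕ) ^ L ∣ p := by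
          have := Nat.dvd_sub (h2L.trans hdx) hw
          simpa using this
        have := Nat.le_of_dvd hp0 this; omega
      · have : (2:ℕ) ^ L ∣ q := by
          have := Nat.dvd_sub (h2L.trans hdx) hw
          simpa using this
        have := Nat.le_of_dvd hq0 this; omega
    have hwD : (2:ℕ) ^ (j * h ^ c) ∣ w := (pow_dvd_pow 2 hDL).trans hw
    have hwD' : (2:ℕ) ^ ((j-1) * h ^ c) ∣ w :=
      (pow_dvd_pow 2 (Nat.mul_le_mul_right _ (by omega))).trans hwD
    refine ⟨hpq, c, j, hc, hj, hDL, by omega, ?_⟩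
    rcases hdisj with ⟨hdx, hdy⟩ | ⟨hdx, hdy⟩
    · exact Or.inl ⟨by simpa using Nat.dvd_sub hdx hwD, by simpa using Nat.dvd_sub hdy hwD'⟩
    · exact Or.inr ⟨by simpa using Nat.dvd_sub hdx hwD, by simpa using Nat.dvd_sub hdy hwD'⟩
  · rintro ⟨hne, c, j, hc, hj, hjL, hd, hdisj⟩
    have hwD : (2:ℕ) ^ (j * h ^ c) ∣ w := (pow_dvd_pow 2 hjL).trans hw
    have hwD' : (2:ℕ) ^ ((j-1) * h ^ c) ∣ w :=
      (pow_dvd_pow 2 (Nat.mul_le_mul_right _ (by omega))).trans hwD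
    refine ⟨by omega, c, j, hc, hj, le_trans hjL hLH, by omega, ?_⟩
    rcases hdisj with ⟨hdx, hdy⟩ | ⟨hdx, hdy⟩
    · exact Or.inl ⟨dvd_add hwD hdx, dvd_add hwD' hdy⟩
    · exact Or.inr ⟨dvd_add hwD hdx, dvd_add hwD' hdy⟩


lemma dist_mul {p q M : ℕ} : (p * M - q * M) + (q * M - p * M) = ((p - q) + (q - p)) * M := by
  rw [← Nat.sub_mul, ← Nat.sub_mul, add_mul]

lemma mul_pred_add {j γ : ℕ} (hj : 1 ≤ j) : j * γ = (j - 1) * γ + γ := by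
  rcases j with _ | j'
  · omega
  · simp [Nat.succ_sub_one, Nat.succ_mul]

lemma pow_dvd_mul_pow_iff {a L p : ℕ} (hL : L ≤ a) :
    (2:ℕ) ^ a ∣ p * 2 ^ L ↔ 2 ^ (a - L) ∣ p := by
  conv_lhs => rw [← Nat.sub_add_cancel hL, pow_add]
  rw [Nat.mul_dvd_mul_iff_right (Nat.pow_pos (n := L) (by norm_num : (0:ℕ) < 2))]

lemma pillarIso {h k H L c0 p q : ℕ} (hh : 2 ≤ h) (hdL : h ^ c0 ∣ L)
    (hHdef : H = L + h ^ c0) (hHle : H ≤ h ^ (c0+1))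
    (hp0 : 0 < p) (hpγ : p < 2 ^ h ^ c0) (hq0 : 0 < q) (hqγ : q < 2 ^ h ^ c0) :
    NAdj h k H (p * 2 ^ L) (q * 2 ^ L) ↔ NAdj h k (h ^ c0) p q := by
  have h2L : (0:ℕ) < 2 ^ L := Nat.pow_pos (by norm_num)
  have hγ : (0:ℕ) < h ^ c0 := Nat.pow_pos (by omega)
  constructor
  · rintro ⟨hne, c, j, hc, hj, hjH, hd, hdisj⟩
    have hpq : p ≠ q := by rintro rfl; exact hne rfl
    rw [dist_mul] at hd
    have hdpos : 1 ≤ (p - q) + (q - p) := by omega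
    have hLD : L < j * h ^ c := by
      have h1 : (2:ℕ) ^ L ≤ ((p - q) + (q - p)) * 2 ^ L := Nat.le_mul_of_pos_left _ (by omega)
      have hlt : (2:ℕ) ^ L < 2 ^ (j * h ^ c) := by omega
      exact (Nat.pow_lt_pow_iff_right (by norm_num)).mp hlt
    rcases le_or_gt c c0 with hcc | hcc
    · have hcl : h ^ c ∣ L := (pow_dvd_pow h hcc).trans hdL
      have hsub : h ^ c ∣ j * h ^ c - L := Nat.dvd_sub (Dvd.intro_left _ rfl) hcl
      obtain ⟨j', hj'⟩ := hsub
      have hγc : (0:ℕ) < h ^ c := Nat.pow_pos (by omega)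
      have e3 : j' * h ^ c = j * h ^ c - L := by rw [mul_comm]; omega
      have hj'1 : 1 ≤ j' := by
        rcases Nat.eq_zero_or_pos j' with rfl | hp
        · exfalso
          have := mul_pred_add (γ := h ^ c) hj
          omega
        · exact hp
      have e1 : j * h ^ c = (j - 1) * h ^ c + h ^ c := mul_pred_add hj
      have e2 : j' * h ^ c = (j' - 1) * h ^ c + h ^ c := mul_pred_add hj'1
      have eD : j * h ^ c = L + j' * h ^ c := by omega
      have eD' : (j - 1) * h ^ c = L + (j' - 1) * h ^ c := by omega
      refine ⟨hpq, c, j', hc, hj'1, by omega, ?_, ?_⟩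
      · have hlt2 : ((p - q) + (q - p)) * 2 ^ L < 2 ^ (j' * h ^ c) * 2 ^ L := by
          rw [← pow_add]
          calc ((p - q) + (q - p)) * 2 ^ L < 2 ^ (j * h ^ c) := hd
            _ = 2 ^ (j' * h ^ c + L) := by rw [eD, add_comm]
        exact Nat.lt_of_mul_lt_mul_right hlt2
      · rcases hdisj with ⟨hdx, hdy⟩ | ⟨hdx, hdy⟩
        · refine Or.inl ⟨?_, ?_⟩
          · have := (pow_dvd_mul_pow_iff (by omega : L ≤ j * h ^ c)).mp hdx
            rwa [show j * h ^ c - L = j' * h ^ c by omega] at this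
          · have := (pow_dvd_mul_pow_iff (by omega : L ≤ (j - 1) * h ^ c)).mp hdy
            rwa [show (j - 1) * h ^ c - L = (j' - 1) * h ^ c by omega] at this
        · refine Or.inr ⟨?_, ?_⟩
          · have := (pow_dvd_mul_pow_iff (by omega : L ≤ j * h ^ c)).mp hdx
            rwa [show j * h ^ c - L = j' * h ^ c by omega] at this
          · have := (pow_dvd_mul_pow_iff (by omega : L ≤ (j - 1) * h ^ c)).mp hdy
            rwa [show (j - 1) * h ^ c - L = (j' - 1) * h ^ c by omega] at this
    · exfalso
      have h1 : h ^ (c0+1) ≤ h ^ c := Nat.pow_le_pow_right (by omega) hcc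
      have hDH : H ≤ j * h ^ c := le_trans (le_trans hHle h1) (Nat.le_mul_of_pos_left _ hj)
      have h2H : (2:ℕ) ^ H ≤ 2 ^ (j * h ^ c) := Nat.pow_le_pow_right (by norm_num) hDH
      have hxlt : p * 2 ^ L < 2 ^ H := by
        rw [hHdef, add_comm, pow_add]
        exact Nat.mul_lt_mul_of_lt_of_le hpγ (le_refl _) h2L
      have hylt : q * 2 ^ L < 2 ^ H := by
        rw [hHdef, add_comm, pow_add]
        exact Nat.mul_lt_mul_of_lt_of_le hqγ (le_refl _) h2L
      rcases hdisj with ⟨hdx, _⟩ | ⟨hdx, _⟩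
      · have := Nat.le_of_dvd (by positivity) hdx; omega
      · have := Nat.le_of_dvd (by positivity) hdx; omega
  · rintro ⟨hne, c, j', hc, hj', hjγ, hd, hdisj⟩
    have hcc : c ≤ c0 := by
      have hle : h ^ c ≤ h ^ c0 := le_trans (Nat.le_mul_of_pos_left _ hj') hjγ
      exact (Nat.pow_le_pow_iff_right (by omega : 1 < h)).mp hle
    have hcl : h ^ c ∣ L := (pow_dvd_pow h hcc).trans hdL
    obtain ⟨jq, hjq⟩ := hcl
    set j := j' + jq with hjdef
    have eD : j * h ^ c = j' * h ^ c + L := by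
      rw [hjdef, add_mul, hjq, mul_comm jq]
    have e1 : j * h ^ c = (j - 1) * h ^ c + h ^ c := mul_pred_add (by omega)
    have e2 : j' * h ^ c = (j' - 1) * h ^ c + h ^ c := mul_pred_add hj'
    have eD' : (j - 1) * h ^ c = (j' - 1) * h ^ c + L := by omega
    have hne' : p * 2 ^ L ≠ q * 2 ^ L := by
      intro hE; exact hne (Nat.eq_of_mul_eq_mul_right h2L hE)
    refine ⟨hne', c, j, hc, by omega, by omega, ?_, ?_⟩
    · rw [dist_mul]
      calc ((p - q) + (q - p)) * 2 ^ L < 2 ^ (j' * h ^ c) * 2 ^ L :=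
            Nat.mul_lt_mul_of_lt_of_le hd (le_refl _) h2L
        _ = 2 ^ (j * h ^ c) := by rw [← pow_add]; congr 1; omega
    · rcases hdisj with ⟨hdx, hdy⟩ | ⟨hdx, hdy⟩
      · refine Or.inl ⟨?_, ?_⟩
        · rw [pow_dvd_mul_pow_iff (by omega), show j * h ^ c - L = j' * h ^ c by omega]
          exact hdx
        · rw [pow_dvd_mul_pow_iff (by omega), show (j - 1) * h ^ c - L = (j' - 1) * h ^ c by omega]
          exact hdy
      · refine Or.inr ⟨?_, ?_⟩
        · rw [pow_dvd_mul_pow_iff (by omega), show j * h ^ c - L = j' * h ^ c by omega]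
          exact hdx
        · rw [pow_dvd_mul_pow_iff (by omega), show (j - 1) * h ^ c - L = (j' - 1) * h ^ c by omega]
          exact hdy


def IsPathN (h k H s : ℕ) (V : ℕ → ℕ) : Prop :=
  (∀ i j, i < s → j < s → (NAdj h k H (V i) (V j) ↔ (i + 1 = j ∨ j + 1 = i))) ∧
  (∀ i j, i < s → j < s → V i = V j → i = j) ∧
  (∀ i, i < s → 0 < V i ∧ V i < 2 ^ H)

lemma IsPathN.mono {h k H s s' : ℕ} {V : ℕ → ℕ} (hp : IsPathN h k H s V) (hs : s' ≤ s) :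
    IsPathN h k H s' V :=
  ⟨fun i j hi hj => hp.1 i j (by omega) (by omega),
   fun i j hi hj => hp.2.1 i j (by omega) (by omega),
   fun i hi => hp.2.2 i (by omega)⟩

lemma window {h k H m x y z : ℕ} (hadj : NAdj h k H x y) (hz : 2 ^ m ∣ z)
    (hx : ¬ 2 ^ m ∣ x) (hy : ¬ 2 ^ m ∣ y) (hzm : 2 ^ m ≤ z)
    (hx1 : z - 2 ^ m < x) (hx2 : x < z + 2 ^ m) :
    z - 2 ^ m < y ∧ y < z + 2 ^ m := by
  have hdvd1 : (2:ℕ) ^ m ∣ z - 2 ^ m := Nat.dvd_sub hz dvd_rfl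
  have hdvd2 : (2:ℕ) ^ m ∣ z + 2 ^ m := Nat.dvd_add hz dvd_rfl
  by_contra hcon
  push_neg at hcon
  rcases le_or_gt y (z - 2 ^ m) with hyle | hygt
  · -- y is far left
    have hylt : y < z - 2 ^ m := by
      rcases Nat.lt_or_ge y (z - 2 ^ m) with hl | hg
      · exact hl
      · exact absurd (le_antisymm hyle hg ▸ hdvd1) hy
    rcases le_or_gt x z with hxz | hxz
    · exact noJump hadj.nsymm hylt (by omega : z - 2 ^ m < x) hdvd1 hy hx
    · exact noJump hadj.nsymm (by omega : y < z) hxz hz hy hx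
  · have hyge : z + 2 ^ m ≤ y := by omega
    have hygt2 : z + 2 ^ m < y := by
      rcases Nat.lt_or_ge (z + 2 ^ m) y with hl | hg
      · exact hl
      · exact absurd ((le_antisymm hg hyge) ▸ hdvd2) hy
    rcases le_or_gt x z with hxz | hxz
    · have hxlt : x < z := by
        rcases Nat.lt_or_ge x z with hl | hg
        · exact hl
        · exact absurd ((le_antisymm hxz hg) ▸ hz) hx
      exact noJump hadj hxlt (by omega : z < y) hz hx hy
    · exact noJump hadj (by omega : x < z + 2 ^ m) (by omega) hdvd2 hx hy

lemma descent {h k : ℕ} (hh : 2 ≤ h) :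
    ∀ j0 c0 m H r V, 1 ≤ j0 → c0 ≤ k → H ≤ h ^ (c0+1) → m = j0 * h ^ c0 → m ≤ H →
    IsPathN h k H (r+1) V → 2 ^ m ∣ V r → (∀ i, i < r → ¬ 2 ^ m ∣ V i) → r ≤ j0 := by
  intro j0
  induction j0 with
  | zero => intro _ _ _ _ _ hj0; omega
  | succ j0 ih =>
    intro c0 m H r V _ hc0 hHle hm hmH hpath hzr hpre
    rcases Nat.eq_zero_or_pos r with rfl | hr
    · omega
    have hγ : (0:ℕ) < h ^ c0 := Nat.pow_pos (by omega)
    have hγm : h ^ c0 ≤ m := by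
      rw [hm]; exact Nat.le_mul_of_pos_left _ (by omega)
    have hdm : h ^ c0 ∣ m := hm ▸ Dvd.intro_left _ rfl
    have hzpos : 0 < V r := (hpath.2.2 r (by omega)).1
    have hzm : 2 ^ m ≤ V r := Nat.le_of_dvd hzpos hzr
    -- containment in the window around z = V r
    have hwin : ∀ d, d < r → V r - 2 ^ m < V (r - 1 - d) ∧ V (r - 1 - d) < V r + 2 ^ m := by
      intro d
      induction d with
      | zero =>
        intro _
        have hadj : NAdj h k H (V r) (V (r - 1)) := by
          rw [hpath.1 r (r-1) (by omega) (by omega)]; omega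
        have hce := closeEdge hh hHle hdm hadj (hpre (r-1) (by omega))
          hzpos (hpath.2.2 r (by omega)).2 (hpath.2.2 (r-1) (by omega)).2
        simp only [Nat.sub_zero]
        omega
      | succ d ihd =>
        intro hd
        have hprev := ihd (by omega)
        have hadj : NAdj h k H (V (r - 1 - d)) (V (r - 1 - (d+1))) := by
          rw [hpath.1 _ _ (by omega) (by omega)]; omega
        exact window hadj hzr (hpre _ (by omega)) (hpre _ (by omega)) hzm hprev.1 hprev.2
    have hwin' : ∀ i, i < r → V r - 2 ^ m < V i ∧ V i < V r + 2 ^ m := by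
      intro i hi
      have := hwin (r - 1 - i) (by omega)
      rwa [show r - 1 - (r - 1 - i) = i by omega] at this
    -- domination: subpillars on the prefix must be at position r-1
    have hdom : ∀ i, i < r → 2 ^ (m - h ^ c0) ∣ V i → i = r - 1 := by
      intro i hi hdvi
      have hne : V r ≠ V i := by
        intro hE; exact hpre i hi (hE ▸ hzr)
      have hd : (V r - V i) + (V i - V r) < 2 ^ m := by
        have := hwin' i hi; omega
      have hadj := domin (h := h) (k := k) (by omega) hc0 hdm hγm hmH hzr hdvi hne hd
      have := (hpath.1 r i (by omega) (by omega)).mp hadj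
      omega
    rcases Nat.eq_zero_or_pos j0 with rfl | hj0pos
    · -- base: m = h^c0, everything in the block is dominated
      by_contra hcon
      push_neg at hcon
      have h0 : (0:ℕ) < r := hr
      have := hdom 0 (by omega) (by simp [hm])
      omega
    · -- step
      have em : m = j0 * h ^ c0 + h ^ c0 := by rw [hm, Nat.succ_mul]
      have em' : m - h ^ c0 = j0 * h ^ c0 := by omega
      by_cases hlast : 2 ^ (m - h ^ c0) ∣ V (r - 1)
      · have hres := ih c0 (m - h ^ c0) H (r - 1) V hj0pos hc0 hHle em' (by omega)
          (by rw [show r - 1 + 1 = r by omega]; exact hpath.mono (by omega)) hlast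
          (fun i hi => fun hdvi => by
            have := hdom i (by omega) hdvi; omega)
        omega
      · have hres := ih c0 (m - h ^ c0) H r V hj0pos hc0 hHle em' (by omega)
          hpath ((pow_dvd_pow 2 (by omega : m - h ^ c0 ≤ m)).trans hzr)
          (fun i hi => fun hdvi => by
            rcases Nat.lt_or_ge i (r-1) with hl | hg
            · have := hdom i (by omega) hdvi; omega
            · have : i = r - 1 := by omega
              exact hlast (this ▸ hdvi))
        omega


lemma quotEq {h k H x y ℓ : ℕ} (hadj : NAdj h k H x y) (hx : ¬ 2 ^ ℓ ∣ x)
    (hy : ¬ 2 ^ ℓ ∣ y) : x / 2 ^ ℓ = y / 2 ^ ℓ := by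
  set E := (2:ℕ) ^ ℓ with hE
  have hEpos : 0 < E := Nat.pow_pos (by norm_num)
  have key : ∀ a b : ℕ, NAdj h k H a b → ¬ E ∣ a → ¬ E ∣ b → a < b → a / E = b / E := by
    intro a b hab ha hb hlt
    by_contra hne
    have hle : a / E ≤ b / E := Nat.div_le_div_right hlt.le
    have hq : a / E < b / E := by omega
    set w := (b / E) * E with hw
    have hwd : E ∣ w := dvd_mul_left E (b / E)
    have hwb : w ≤ b := Nat.div_mul_le_self b E
    have hwneb : w ≠ b := by
      intro hEq; exact hb (hEq ▸ hwd)
    have haw : a < w := by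
      have h1 := Nat.div_add_mod a E
      have h2 : a % E < E := Nat.mod_lt _ hEpos
      have h3 : (a / E + 1) * E ≤ (b / E) * E := Nat.mul_le_mul_right E (by omega)
      have h4 : (a / E + 1) * E = (a / E) * E + E := by ring
      have h5 : E * (a / E) = (a / E) * E := mul_comm _ _
      omega
    exact noJump hab haw (by omega) hwd ha hb
  rcases lt_trichotomy x y with hlt | hEq | hgt
  · exact key x y hadj hx hy hlt
  · rw [hEq]
  · exact (key y x hadj.nsymm hy hx hgt).symm

lemma sameQuot {h k H ℓ s : ℕ} {V : ℕ → ℕ} (hpath : IsPathN h k H s V)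
    (hnone : ∀ i, i < s → ¬ 2 ^ ℓ ∣ V i) : ∀ i, i < s → V i / 2 ^ ℓ = V 0 / 2 ^ ℓ := by
  intro i
  induction i with
  | zero => intro _; rfl
  | succ i ihi =>
    intro hi
    have hadj : NAdj h k H (V i) (V (i+1)) := by
      rw [hpath.1 i (i+1) (by omega) (by omega)]; omega
    rw [← quotEq hadj (hnone i (by omega)) (hnone (i+1) (by omega))]
    exact ihi (by omega)

lemma nearMult {E a Q y : ℕ} (hE : 0 < E) (h1 : E * Q ≤ y) (h2 : y < E * Q + E)
    (h3 : (E * a - y) + (y - E * a) < E) : a = Q ∨ a = Q + 1 := by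
  have e1 : E * (Q + 2) = E * Q + E + E := by ring
  have e2 : E * (a + 1) = E * a + E := by ring
  have l1 : E * a < E * (Q + 2) := by omega
  have l2 : E * Q < E * (a + 1) := by omega
  have a1 : a < Q + 2 := by
    by_contra hcon
    push_neg at hcon
    exact absurd (Nat.mul_le_mul_left E hcon) (by omega)
  have a2 : Q < a + 1 := by
    by_contra hcon
    push_neg at hcon
    exact absurd (Nat.mul_le_mul_left E hcon) (by omega)
  omega

lemma adjStep {h k H L Q u v : ℕ} (hne : u ≠ v) (hu : u = 2 ^ L * Q)
    (hv : v = 2 ^ L * (Q+1)) (hLH : L + 1 ≤ H) : NAdj h k H u v := by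
  refine ⟨hne, 0, L+1, Nat.zero_le _, by omega, by simpa using hLH, ?_, ?_⟩
  · simp only [pow_zero, mul_one]
    have e1 : (2:ℕ)^L*(Q+1) = 2^L*Q + 2^L := by ring
    have e2 : (2:ℕ)^(L+1) = 2^L + 2^L := by rw [pow_succ]; ring
    have e3 : (0:ℕ) < 2^L := Nat.pow_pos (by norm_num)
    omega
  · simp only [pow_zero, mul_one, Nat.add_sub_cancel]
    rcases Nat.even_or_odd Q with ⟨t, ht⟩ | ⟨t, ht⟩
    · exact Or.inl ⟨⟨t, by rw [hu, ht, pow_succ]; ring⟩, ⟨Q+1, hv⟩⟩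
    · exact Or.inr ⟨⟨t+1, by rw [hv, ht, pow_succ]; ring⟩, ⟨Q, hu⟩⟩

lemma contig {h k L c0 H s i j : ℕ} {V : ℕ → ℕ} (hh : 2 ≤ h) (hdL : h ^ c0 ∣ L)
    (hH : H = L + h ^ c0) (hHle : H ≤ h ^ (c0+1)) (hpath : IsPathN h k H s V)
    (hi : i < s) (hj : j < s) (hij : i + 1 < j)
    (hpi : 2 ^ L ∣ V i) (hpj : 2 ^ L ∣ V j)
    (hbet : ∀ t, i < t → t < j → ¬ 2 ^ L ∣ V t) : False := by
  set E := (2:ℕ) ^ L with hE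
  have hEpos : 0 < E := Nat.pow_pos (by norm_num)
  have hγ : (0:ℕ) < h ^ c0 := Nat.pow_pos (by omega)
  set Q := V (i+1) / E with hQ
  -- the whole open segment lies in block Q
  have hquot : ∀ t, i < t → t < j → V t / E = Q := by
    intro t ht1 ht2
    have hseg : IsPathN h k H (j - i - 1) (fun d => V (i + 1 + d)) := by
      refine ⟨fun a b ha hb => ?_, fun a b ha hb hEq => ?_, fun a ha => hpath.2.2 _ (by omega)⟩
      · rw [hpath.1 (i+1+a) (i+1+b) (by omega) (by omega)]
        constructor <;> omega
      · have := hpath.2.1 (i+1+a) (i+1+b) (by omega) (by omega) hEq; omega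
    have := sameQuot hseg (fun d hd => hbet (i+1+d) (by omega) (by omega)) (t - i - 1) (by omega)
    simpa [show i + 1 + (t - i - 1) = t by omega] using this
  have hQ1 : E * Q ≤ V (i+1) := by
    rw [hQ, mul_comm]; exact Nat.div_mul_le_self _ _
  have hQbound : ∀ t, i < t → t < j → E * Q ≤ V t ∧ V t < E * Q + E := by
    intro t ht1 ht2
    have h1 := Nat.div_add_mod (V t) E
    have h2 : V t % E < E := Nat.mod_lt _ hEpos
    have h3 := hquot t ht1 ht2
    rw [h3] at h1
    omega
  -- V i and V j are the two endpoints of block Q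
  have hclose1 : (V i - V (i+1)) + (V (i+1) - V i) < E := by
    have hadj : NAdj h k H (V i) (V (i+1)) := by
      rw [hpath.1 i (i+1) (by omega) (by omega)]; omega
    exact closeEdge hh hHle hdL hadj (hbet (i+1) (by omega) (by omega))
      (hpath.2.2 i hi).1 (hpath.2.2 i hi).2 (hpath.2.2 (i+1) (by omega)).2
  have hclose2 : (V j - V (j-1)) + (V (j-1) - V j) < E := by
    have hadj : NAdj h k H (V j) (V (j-1)) := by
      rw [hpath.1 j (j-1) (by omega) (by omega)]; omega
    exact closeEdge hh hHle hdL hadj (hbet (j-1) (by omega) (by omega))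
      (hpath.2.2 j hj).1 (hpath.2.2 j hj).2 (hpath.2.2 (j-1) (by omega)).2
  obtain ⟨ai, hai⟩ := hpi
  obtain ⟨aj, haj⟩ := hpj
  have hbound1 := hQbound (i+1) (by omega) (by omega)
  have hbound2 := hQbound (j-1) (by omega) (by omega)
  have hi12 : ai = Q ∨ ai = Q + 1 := by
    refine nearMult hEpos hbound1.1 hbound1.2 ?_
    rw [← hai]; omega
  have hj12 : aj = Q ∨ aj = Q + 1 := by
    refine nearMult hEpos hbound2.1 hbound2.2 ?_
    rw [← haj]; omega
  have hVne : V i ≠ V j := by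
    intro hEq
    have := hpath.2.1 i j hi hj hEq; omega
  have hLH : L + 1 ≤ H := by omega
  rw [hE] at hai haj
  have hadjij : NAdj h k H (V i) (V j) := by
    rcases hi12 with rfl | rfl <;> rcases hj12 with rfl | rfl
    · exact absurd (hai.trans haj.symm) hVne
    · exact adjStep hVne hai haj hLH
    · exact (adjStep hVne.symm haj hai hLH).nsymm
    · exact absurd (hai.trans haj.symm) hVne
  have := (hpath.1 i j hi hj).mp hadjij
  omega



lemma IsPathN.rev {h k H s : ℕ} {V : ℕ → ℕ} (hp : IsPathN h k H s V) :
    IsPathN h k H s (fun t => V (s - 1 - t)) := by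
  refine ⟨fun i j hi hj => ?_, fun i j hi hj hEq => ?_, fun i hi => hp.2.2 _ (by omega)⟩
  · show NAdj h k H (V (s - 1 - i)) (V (s - 1 - j)) ↔ _
    rw [hp.1 (s-1-i) (s-1-j) (by omega) (by omega)]
    omega
  · have := hp.2.1 (s-1-i) (s-1-j) (by omega) (by omega) hEq; omega

lemma baseCase {h k s : ℕ} {V : ℕ → ℕ} (hp : IsPathN h k 1 s V) : s ≤ 1 := by
  by_contra hcon
  push_neg at hcon
  have e : (2:ℕ) ^ (1:ℕ) = 2 := by norm_num
  have h0 := hp.2.2 0 (by omega)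
  have h1 := hp.2.2 1 (by omega)
  have := hp.2.1 0 1 (by omega) (by omega) (by omega)
  omega

theorem natBound {h k : ℕ} (hh : 2 ≤ h) :
    ∀ N c0 m0 s (V : ℕ → ℕ), c0 ≤ k → 1 ≤ m0 → m0 ≤ h → c0 * h + (m0 - 1) ≤ N →
    IsPathN h k (m0 * h ^ c0) s V → s ≤ 2*(h-1)*c0 + 2*(m0-1) + 1 := by
  intro N
  induction N with
  | zero =>
    intro c0 m0 s V hc0 hm1 hmh hN hpath
    have hc00 : c0 = 0 := by
      have := Nat.le_mul_of_pos_right c0 (show 0 < h by omega)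
      omega
    have hm01 : m0 = 1 := by omega
    subst hc00; subst hm01
    have : s ≤ 1 := baseCase (by simpa using hpath)
    omega
  | succ N ih =>
    intro c0 m0 s V hc0 hm1 hmh hN hpath
    rcases m0 with _ | m'
    · omega
    rcases Nat.eq_zero_or_pos m' with rfl | hm'
    · -- m0 = 1
      rcases c0 with _ | c0'
      · have : s ≤ 1 := baseCase (by simpa using hpath)
        omega
      · have hpath' : IsPathN h k (h * h ^ c0') s V := by
          rwa [show (0+1) * h ^ (c0'+1) = h * h ^ c0' by rw [pow_succ]; ring] at hpath
        have hmeas : c0' * h + (h - 1) ≤ N := by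
          have e : (c0'+1) * h = c0' * h + h := by ring
          omega
        have := ih c0' h s V (by omega) (by omega) (le_refl h) hmeas hpath'
        have e2 : 2*(h-1)*(c0'+1) = 2*(h-1)*c0' + 2*(h-1) := by ring
        omega
    · -- m0 = m' + 1 with m' ≥ 1
      set γ := h ^ c0 with hγdef
      set L := m' * h ^ c0 with hLdef
      set H := (m'+1) * h ^ c0 with hHdef0
      have hγpos : 0 < γ := Nat.pow_pos (by omega)
      have hdL : γ ∣ L := Dvd.intro_left m' rfl
      have hHdef : H = L + γ := by rw [hHdef0, hLdef, hγdef]; ring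
      have hHle : H ≤ h ^ (c0+1) := by
        rw [hHdef0, pow_succ, mul_comm (h ^ c0) h]
        exact Nat.mul_le_mul_right _ (by omega)
      have hLH : L ≤ H := by omega
      have h2L : (0:ℕ) < 2 ^ L := Nat.pow_pos (by norm_num)
      have h2H : (2:ℕ) ^ H = 2 ^ L * 2 ^ γ := by rw [hHdef, pow_add]
      by_cases hfree : ∀ i, i < s → ¬ 2 ^ L ∣ V i
      · -- pillar-free: stay in one block, translate down
        rcases Nat.eq_zero_or_pos s with rfl | hs
        · omega
        have hq := sameQuot hpath hfree
        set w := 2 ^ L * (V 0 / 2 ^ L) with hw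
        have hwd : 2 ^ L ∣ w := Dvd.intro _ rfl
        have hper : ∀ i, i < s → w ≤ V i ∧ V i - w < 2 ^ L ∧ 0 < V i - w := by
          intro i hi
          have h1 := Nat.div_add_mod (V i) (2 ^ L)
          have h2 : V i % 2 ^ L < 2 ^ L := Nat.mod_lt _ h2L
          have h3 := hq i hi
          rw [h3] at h1
          have h4 : V i ≠ w := by
            intro hEq; exact hfree i hi (hEq ▸ hwd)
          omega
        have hpath' : IsPathN h k L s (fun t => V t - w) := by
          refine ⟨fun a b ha hb => ?_, fun a b ha hb hEq => ?_, fun a ha => ?_⟩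
          · show NAdj h k L (V a - w) (V b - w) ↔ _
            have hpa := hper a ha
            have hpb := hper b hb
            rw [← blockIso hwd hLH hpa.2.2 hpa.2.1 hpb.2.2 hpb.2.1,
              Nat.add_sub_cancel' hpa.1, Nat.add_sub_cancel' hpb.1]
            exact hpath.1 a b ha hb
          · have hpa := hper a ha
            have hpb := hper b hb
            have hEq' : V a - w = V b - w := hEq
            exact hpath.2.1 a b ha hb (by omega)
          · have hpa := hper a ha
            exact ⟨hpa.2.2, hpa.2.1⟩
        have hmeas : c0 * h + (m' - 1) ≤ N := by omega
        have := ih c0 m' s (fun t => V t - w) hc0 (by omega) (by omega) hmeas hpath'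
        omega
      · push_neg at hfree
        obtain ⟨ip, hip, hipd⟩ := hfree
        classical
        set S := (Finset.range s).filter (fun i => 2 ^ L ∣ V i) with hS
        have hSne : S.Nonempty :=
          ⟨ip, Finset.mem_filter.mpr ⟨Finset.mem_range.mpr hip, hipd⟩⟩
        set i1 := S.min' hSne with hi1
        set i2 := S.max' hSne with hi2
        have hi1S : i1 ∈ S := S.min'_mem hSne
        have hi2S : i2 ∈ S := S.max'_mem hSne
        have hi1s : i1 < s := Finset.mem_range.mp (Finset.mem_filter.mp hi1S).1
        have hi2s : i2 < s := Finset.mem_range.mp (Finset.mem_filter.mp hi2S).1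
        have hi1d : 2 ^ L ∣ V i1 := (Finset.mem_filter.mp hi1S).2
        have hi2d : 2 ^ L ∣ V i2 := (Finset.mem_filter.mp hi2S).2
        have hmemS : ∀ t, t < s → 2 ^ L ∣ V t → t ∈ S := by
          intro t ht htd
          exact Finset.mem_filter.mpr ⟨Finset.mem_range.mpr ht, htd⟩
        have hi1min : ∀ t, t < s → 2 ^ L ∣ V t → i1 ≤ t := by
          intro t ht htd; exact S.min'_le t (hmemS t ht htd)
        have hi2max : ∀ t, t < s → 2 ^ L ∣ V t → t ≤ i2 := by
          intro t ht htd; exact S.le_max' t (hmemS t ht htd)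
        have hi12 : i1 ≤ i2 := S.min'_le i2 hi2S
        -- contiguity
        have hcont : ∀ t, i1 ≤ t → t ≤ i2 → 2 ^ L ∣ V t := by
          by_contra hcon
          push_neg at hcon
          obtain ⟨t, ht1, ht2, htd⟩ := hcon
          have htne1 : t ≠ i1 := by rintro rfl; exact htd hi1d
          have htne2 : t ≠ i2 := by rintro rfl; exact htd hi2d
          set S1 := S.filter (fun u => u < t) with hS1
          have hS1ne : S1.Nonempty :=
            ⟨i1, Finset.mem_filter.mpr ⟨hi1S, by omega⟩⟩
          set a := S1.max' hS1ne with ha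
          have haS1 : a ∈ S1 := S1.max'_mem hS1ne
          have haS : a ∈ S := (Finset.mem_filter.mp haS1).1
          have hat : a < t := (Finset.mem_filter.mp haS1).2
          set S2 := S.filter (fun u => t < u) with hS2
          have hS2ne : S2.Nonempty :=
            ⟨i2, Finset.mem_filter.mpr ⟨hi2S, by omega⟩⟩
          set b := S2.min' hS2ne with hb
          have hbS2 : b ∈ S2 := S2.min'_mem hS2ne
          have hbS : b ∈ S := (Finset.mem_filter.mp hbS2).1
          have htb : t < b := (Finset.mem_filter.mp hbS2).2
          have has : a < s := Finset.mem_range.mp (Finset.mem_filter.mp haS).1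
          have hbs : b < s := Finset.mem_range.mp (Finset.mem_filter.mp hbS).1
          have had : 2 ^ L ∣ V a := (Finset.mem_filter.mp haS).2
          have hbd : 2 ^ L ∣ V b := (Finset.mem_filter.mp hbS).2
          refine contig hh hdL hHdef hHle hpath has hbs (by omega) had hbd ?_
          intro u hu1 hu2 hud
          have hus : u < s := by omega
          have huS : u ∈ S := hmemS u hus hud
          rcases lt_trichotomy u t with hl | rfl | hg
          · have : u ∈ S1 := Finset.mem_filter.mpr ⟨huS, hl⟩
            have := S1.le_max' u this
            omega
          · exact htd hud
          · have : u ∈ S2 := Finset.mem_filter.mpr ⟨huS, hg⟩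
            have := S2.min'_le u this
            omega
        -- prefix
        have hpre : i1 ≤ m' := by
          refine descent hh m' c0 L H i1 V hm' hc0 hHle rfl hLH
            (hpath.mono (by omega)) hi1d ?_
          intro i hi hid
          have := hi1min i (by omega) hid
          omega
        -- suffix
        have hsuf : s - 1 - i2 ≤ m' := by
          refine descent hh m' c0 L H (s - 1 - i2) (fun t => V (s - 1 - t)) hm' hc0 hHle rfl hLH
            (hpath.rev.mono (by omega)) ?_ ?_
          · show 2 ^ L ∣ V (s - 1 - (s - 1 - i2))
            rwa [show s - 1 - (s - 1 - i2) = i2 by omega]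
          · intro i hi hid
            have hgt : i2 < s - 1 - i := by omega
            have := hi2max (s - 1 - i) (by omega) hid
            omega
        -- middle: pillar path
        have hmid : i2 - i1 + 1 ≤ 2*(h-1)*c0 + 1 := by
          have hP : IsPathN h k (1 * h ^ c0) (i2 - i1 + 1) (fun t => V (i1 + t) / 2 ^ L) := by
            rw [one_mul]
            have hVd : ∀ t, t ≤ i2 - i1 → 2 ^ L ∣ V (i1 + t) :=
              fun t ht => hcont (i1 + t) (by omega) (by omega)
            have hVB : ∀ t, t ≤ i2 - i1 →
                0 < V (i1 + t) / 2 ^ L ∧ V (i1 + t) / 2 ^ L < 2 ^ γ := by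
              intro t ht
              have hpos := (hpath.2.2 (i1 + t) (by omega)).1
              have hlt := (hpath.2.2 (i1 + t) (by omega)).2
              constructor
              · exact (Nat.one_le_div_iff h2L).mpr (Nat.le_of_dvd hpos (hVd t ht))
              · rw [Nat.div_lt_iff_lt_mul h2L]
                rw [h2H] at hlt
                have e := mul_comm ((2:ℕ)^L) ((2:ℕ)^γ)
                omega
            refine ⟨fun a b ha hb => ?_, fun a b ha hb hEq => ?_, fun a ha => hVB a (by omega)⟩
            · show NAdj h k (h ^ c0) (V (i1 + a) / 2 ^ L) (V (i1 + b) / 2 ^ L) ↔ _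
              have hBa := hVB a (by omega)
              have hBb := hVB b (by omega)
              rw [← pillarIso hh hdL hHdef hHle hBa.1 hBa.2 hBb.1 hBb.2,
                Nat.div_mul_cancel (hVd a (by omega)), Nat.div_mul_cancel (hVd b (by omega))]
              rw [hpath.1 (i1+a) (i1+b) (by omega) (by omega)]
              omega
            · have hEq2 : V (i1 + a) = V (i1 + b) := by
                have e1 := Nat.div_mul_cancel (hVd a (by omega))
                have e2 := Nat.div_mul_cancel (hVd b (by omega))
                have hEq' : V (i1 + a) / 2 ^ L = V (i1 + b) / 2 ^ L := hEq
                rw [← e1, ← e2, hEq']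
              have := hpath.2.1 (i1+a) (i1+b) (by omega) (by omega) hEq2
              omega
          have := ih c0 1 (i2 - i1 + 1) _ hc0 (le_refl 1) (by omega) (by omega) hP
          omega
        omega


theorem natBoundZ {h k s : ℕ} {V : ℕ → ℕ} (hh : 2 ≤ h)
    (hiff : ∀ i j, i < s → j < s → (NAdj h k (h * h ^ k) (V i) (V j) ↔ (i + 1 = j ∨ j + 1 = i)))
    (hinj : ∀ i j, i < s → j < s → V i = V j → i = j)
    (hlt : ∀ i, i < s → V i < 2 ^ (h * h ^ k)) :
    s ≤ 4 * (h - 1) * (k + 1) + 3 := by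
  have hb : ∀ (s' : ℕ) (W : ℕ → ℕ), IsPathN h k (h * h ^ k) s' W →
      s' ≤ 2*(h-1)*k + 2*(h-1) + 1 := by
    intro s' W hp
    exact natBound hh (k * h + (h-1)) k h s' W (le_refl k) (by omega) (le_refl h)
      (le_refl _) hp
  have key : 2*(h-1)*k + 2*(h-1) + 1 + (2*(h-1)*k + 2*(h-1) + 1) + 1
      ≤ 4 * (h - 1) * (k + 1) + 3 := by
    have e : 4*(h-1)*(k+1) = 2*(h-1)*k + 2*(h-1) + (2*(h-1)*k + 2*(h-1)) := by ring
    omega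
  by_cases hz : ∀ i, i < s → 0 < V i
  · have := hb s V ⟨hiff, hinj, fun i hi => ⟨hz i hi, hlt i hi⟩⟩
    omega
  · push_neg at hz
    obtain ⟨i0, hi0, hV0⟩ := hz
    have hV0' : V i0 = 0 := by omega
    have hnz : ∀ i, i < s → i ≠ i0 → 0 < V i := by
      intro i hi hne
      rcases Nat.eq_zero_or_pos (V i) with hEq | hp
      · exact absurd (hinj i i0 hi hi0 (by omega)) hne
      · exact hp
    have h1 : i0 ≤ 2*(h-1)*k + 2*(h-1) + 1 := by
      refine hb i0 V ⟨fun i j hi hj => hiff i j (by omega) (by omega),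
        fun i j hi hj => hinj i j (by omega) (by omega),
        fun i hi => ⟨hnz i (by omega) (by omega), hlt i (by omega)⟩⟩
    have h2 : s - i0 - 1 ≤ 2*(h-1)*k + 2*(h-1) + 1 := by
      refine hb (s - i0 - 1) (fun t => V (i0 + 1 + t))
        ⟨fun i j hi hj => ?_, fun i j hi hj hEq => ?_, fun i hi => ?_⟩
      · show NAdj h k _ (V (i0+1+i)) (V (i0+1+j)) ↔ _
        rw [hiff (i0+1+i) (i0+1+j) (by omega) (by omega)]
        omega
      · have := hinj (i0+1+i) (i0+1+j) (by omega) (by omega) hEq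
        omega
      · exact ⟨hnz (i0+1+i) (by omega) (by omega), hlt (i0+1+i) (by omega)⟩
    omega


def DyC (H x y : ℕ) : Prop :=
  x < y ∧ ∃ t, t + 1 ≤ H ∧ y - x = 2 ^ t ∧
    ((2 ^ (t+1) ∣ x ∧ 2 ^ t ∣ y) ∨ (2 ^ (t+1) ∣ y ∧ 2 ^ t ∣ x))

def RC (h H c x y : ℕ) : Prop :=
  x < y ∧ ∃ j, 1 ≤ j ∧ j * h ^ c ≤ H ∧ 2 ^ (j * h ^ c) ∣ x ∧ 2 ^ ((j-1) * h ^ c) ∣ y ∧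
    y - x < 2 ^ (j * h ^ c)

def LC (h H c x y : ℕ) : Prop :=
  x < y ∧ ∃ j, 1 ≤ j ∧ j * h ^ c ≤ H ∧ 2 ^ (j * h ^ c) ∣ y ∧ 2 ^ ((j-1) * h ^ c) ∣ x ∧
    y - x < 2 ^ (j * h ^ c)

def Cls (h H i x y : ℕ) : Prop :=
  if i = 0 then DyC H x y else if i % 2 = 1 then RC h H ((i+1)/2) x y else LC h H (i/2) x y

lemma cls_lt {h H i x y : ℕ} (hc : Cls h H i x y) : x < y := by
  unfold Cls at hc
  split at hc
  · exact hc.1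
  · split at hc
    · exact hc.1
    · exact hc.1

lemma dy_noncross {H a b c d : ℕ} (h1 : DyC H a b) (h2 : DyC H c d)
    (hac : a < c) (hcb : c < b) (hbd : b < d) : False := by
  obtain ⟨hab, t, htH, htd, hdisj⟩ := h1
  obtain ⟨hcd, t', htH', htd', hdisj'⟩ := h2
  have hta : 2 ^ t ∣ a ∧ 2 ^ t ∣ b := by
    rcases hdisj with ⟨h1', h2'⟩ | ⟨h1', h2'⟩
    · exact ⟨(pow_dvd_pow 2 (by omega)).trans h1', h2'⟩
    · exact ⟨h2', (pow_dvd_pow 2 (by omega)).trans h1'⟩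
  have htc : 2 ^ t' ∣ c ∧ 2 ^ t' ∣ d := by
    rcases hdisj' with ⟨h1', h2'⟩ | ⟨h1', h2'⟩
    · exact ⟨(pow_dvd_pow 2 (by omega)).trans h1', h2'⟩
    · exact ⟨h2', (pow_dvd_pow 2 (by omega)).trans h1'⟩
  rcases le_or_gt t t' with hle | hlt
  · -- 2^t ∣ c, a < c < b = a + 2^t
    have hdc : (2:ℕ) ^ t ∣ c := (pow_dvd_pow 2 hle).trans htc.1
    have := mult_dist (Nat.pow_pos (n := t) (by norm_num)) hta.1 hdc (by omega)
    omega
  · have hdb : (2:ℕ) ^ t' ∣ b := (pow_dvd_pow 2 (by omega)).trans hta.2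
    have := mult_dist (Nat.pow_pos (n := t') (by norm_num)) htc.1 hdb (by omega)
    omega

lemma rc_noncross {h H c0 a b c d : ℕ} (h1 : RC h H c0 a b) (h2 : RC h H c0 c d)
    (hac : a < c) (hcb : c < b) (hbd : b < d) : False := by
  obtain ⟨hab, j, hj1, hjH, hda, hdb, hdist⟩ := h1
  obtain ⟨hcd, j', hj1', hjH', hdc, hdd, hdist'⟩ := h2
  rcases le_or_gt j j' with hle | hlt
  · -- 2^(j γ) ∣ c since j ≤ j'
    have hdvd : (2:ℕ) ^ (j * h ^ c0) ∣ c :=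
      (pow_dvd_pow 2 (Nat.mul_le_mul_right _ hle)).trans hdc
    have := mult_dist (Nat.pow_pos (n := (j * h ^ c0)) (by norm_num)) hda hdvd (by omega)
    omega
  · -- j' ≤ j - 1 : 2^(j' γ) ∣ b
    have hdvd : (2:ℕ) ^ (j' * h ^ c0) ∣ b :=
      (pow_dvd_pow 2 (Nat.mul_le_mul_right _ (by omega))).trans hdb
    have := mult_dist (Nat.pow_pos (n := (j' * h ^ c0)) (by norm_num)) hdc hdvd (by omega)
    omega

lemma lc_noncross {h H c0 a b c d : ℕ} (h1 : LC h H c0 a b) (h2 : LC h H c0 c d)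
    (hac : a < c) (hcb : c < b) (hbd : b < d) : False := by
  obtain ⟨hab, j, hj1, hjH, hdb, hda, hdist⟩ := h1
  obtain ⟨hcd, j', hj1', hjH', hdd, hdc, hdist'⟩ := h2
  rcases le_or_gt j' j with hle | hlt
  · -- 2^(j' γ) ∣ b and ∣ d, 0 < d - b < 2^(j'γ)
    have hdvd : (2:ℕ) ^ (j' * h ^ c0) ∣ b :=
      (pow_dvd_pow 2 (Nat.mul_le_mul_right _ hle)).trans hdb
    have := mult_dist (Nat.pow_pos (n := (j' * h ^ c0)) (by norm_num)) hdd hdvd (by omega)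
    omega
  · -- j ≤ j' - 1 : 2^(jγ) ∣ c and ∣ b, 0 < b - c < 2^(jγ)
    have hdvd : (2:ℕ) ^ (j * h ^ c0) ∣ c :=
      (pow_dvd_pow 2 (Nat.mul_le_mul_right _ (by omega))).trans hdc
    have := mult_dist (Nat.pow_pos (n := (j * h ^ c0)) (by norm_num)) hdb hdvd (by omega)
    omega

lemma cls_noncross {h H i a b c d : ℕ} (h1 : Cls h H i a b) (h2 : Cls h H i c d)
    (hac : a < c) (hcb : c < b) (hbd : b < d) : False := by
  unfold Cls at h1 h2
  split at h1 <;> [skip; split at h1] <;> split at h2 <;>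
    first
      | exact dy_noncross h1 h2 hac hcb hbd
      | exact rc_noncross h1 h2 hac hcb hbd
      | (try split at h2) <;>
        first
          | exact rc_noncross h1 h2 hac hcb hbd
          | exact lc_noncross h1 h2 hac hcb hbd
          | omega

lemma cls_adj {h k H i x y : ℕ} (hi : i ≤ 2 * k) (hc : Cls h H i x y) : NAdj h k H x y := by
  unfold Cls at hc
  split at hc
  · obtain ⟨hxy, t, htH, htd, hdisj⟩ := hc
    have h2t : (0:ℕ) < 2 ^ t := Nat.pow_pos (by norm_num)
    refine ⟨by omega, 0, t + 1, by omega, by omega, by simpa using htH, ?_, ?_⟩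
    · simp only [pow_zero, mul_one]
      have : (2:ℕ) ^ (t+1) = 2 ^ t + 2 ^ t := by rw [pow_succ]; ring
      omega
    · simpa only [pow_zero, mul_one, Nat.add_sub_cancel] using hdisj
  · split at hc
    · obtain ⟨hxy, j, hj1, hjH, hdx, hdy, hdist⟩ := hc
      exact ⟨by omega, (i+1)/2, j, by omega, hj1, hjH, by omega, Or.inl ⟨hdx, hdy⟩⟩
    · obtain ⟨hxy, j, hj1, hjH, hdy, hdx, hdist⟩ := hc
      exact ⟨by omega, i/2, j, by omega, hj1, hjH, by omega, Or.inr ⟨hdy, hdx⟩⟩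

lemma adj_cls {h k H x y : ℕ} (hadj : NAdj h k H x y) (hxy : x < y) :
    ∃ i, i ≤ 2 * k ∧ Cls h H i x y := by
  obtain ⟨hne, c, j, hc, hj, hjH, hd, hdisj⟩ := hadj
  rcases Nat.eq_zero_or_pos c with rfl | hcpos
  · -- dyadic class
    refine ⟨0, by omega, ?_⟩
    unfold Cls
    rw [if_pos rfl]
    simp only [pow_zero, mul_one] at hjH hd hdisj
    have h2j : (2:ℕ) ^ j = 2 ^ (j-1) + 2 ^ (j-1) := by
      conv_lhs => rw [← Nat.sub_add_cancel hj]
      rw [pow_succ]; ring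
    have hmd : (2:ℕ) ^ (j-1) ∣ x ∧ (2:ℕ) ^ (j-1) ∣ y := by
      rcases hdisj with ⟨h1', h2'⟩ | ⟨h1', h2'⟩
      · exact ⟨(pow_dvd_pow 2 (by omega)).trans h1', h2'⟩
      · exact ⟨h2', (pow_dvd_pow 2 (by omega)).trans h1'⟩
    have hdd : (2:ℕ) ^ (j-1) ∣ y - x := Nat.dvd_sub hmd.2 hmd.1
    have h2pos : (0:ℕ) < 2 ^ (j-1) := Nat.pow_pos (by norm_num)
    have hge : 2 ^ (j-1) ≤ y - x := Nat.le_of_dvd (by omega) hdd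
    have hlt2 : y - x < 2 ^ (j-1) + 2 ^ (j-1) := by omega
    have heq : y - x = 2 ^ (j-1) := by
      obtain ⟨a, ha⟩ := hdd
      rcases a with _ | _ | a2
      · have he : (2:ℕ) ^ (j-1) * 0 = 0 := by ring
        omega
      · have he : (2:ℕ) ^ (j-1) * (0 + 1) = 2 ^ (j-1) := by ring
        omega
      · exfalso
        have he : (2:ℕ) ^ (j-1) * (a2 + 1 + 1) = 2 ^ (j-1) * a2 + 2 ^ (j-1) + 2 ^ (j-1) := by
          ring
        omega
    refine ⟨hxy, j - 1, by omega, heq, ?_⟩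
    rw [show j - 1 + 1 = j by omega]
    exact hdisj
  · rcases hdisj with ⟨hdx, hdy⟩ | ⟨hdy, hdx⟩
    · refine ⟨2*c - 1, by omega, ?_⟩
      unfold Cls
      rw [if_neg (by omega), if_pos (by omega), show (2*c-1+1)/2 = c by omega]
      exact ⟨hxy, j, hj, hjH, hdx, hdy, by omega⟩
    · refine ⟨2*c, by omega, ?_⟩
      unfold Cls
      rw [if_neg (by omega), if_neg (by omega), show (2*c)/2 = c by omega]
      exact ⟨hxy, j, hj, hjH, hdy, hdx, by omega⟩

lemma ham_adj {h k H x : ℕ} (hH : 1 ≤ H) : NAdj h k H x (x + 1) := by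
  refine ⟨by omega, 0, 1, by omega, le_refl 1, by simpa using hH, ?_, ?_⟩
  · simp only [pow_zero, mul_one, pow_one]
    omega
  · simp only [pow_zero, mul_one, pow_one, Nat.sub_self, zero_mul]
    rcases Nat.even_or_odd x with ⟨t, ht⟩ | ⟨t, ht⟩
    · exact Or.inl ⟨⟨t, by omega⟩, one_dvd _⟩
    · exact Or.inr ⟨⟨t + 1, by omega⟩, one_dvd _⟩


theorem stmt13 (k : ℕ) :
    ∃ C : ℝ, 0 < C ∧ ∀ m : ℕ, ∃ n : ℕ, m ≤ n ∧
      ∃ G : SimpleGraph (Fin n),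
        OrderedAlongHamPath G ∧ KNonCrossing G (2 * k + 1) ∧
        ∀ (s : ℕ) (w : Fin s → Fin n), IsInducedPath G w →
          (s : ℝ) ≤ C * (Real.logb 2 n) ^ ((1 : ℝ) / ((k : ℝ) + 1)) := by
  classical
  refine ⟨(4 * k + 7 : ℝ), by positivity, ?_⟩
  intro m
  set h : ℕ := max 2 m with hhdef
  have hh2 : 2 ≤ h := le_max_left _ _
  set H : ℕ := h * h ^ k with hHdef
  have hH1 : 1 ≤ H := by
    have : 1 ≤ h ^ k := Nat.one_le_pow _ _ (by omega)
    calc 1 ≤ h := by omega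
      _ = h * 1 := (mul_one h).symm
      _ ≤ h * h ^ k := Nat.mul_le_mul_left h this
  set n : ℕ := 2 ^ H with hndef
  have hmn : m ≤ n := by
    have h1 : m ≤ h := le_max_right _ _
    have h2 : h ≤ H := by
      have : 1 ≤ h ^ k := Nat.one_le_pow _ _ (by omega)
      calc h = h * 1 := (mul_one h).symm
        _ ≤ h * h ^ k := Nat.mul_le_mul_left h this
    have h3 : H < 2 ^ H := Nat.lt_two_pow_self (n := H)
    omega
  refine ⟨n, hmn, ?_⟩
  set G : SimpleGraph (Fin n) :=
    { Adj := fun a b => NAdj h k H a.val b.val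
      symm := ⟨fun a b hab => hab.nsymm⟩
      loopless := ⟨fun a ha => ha.1 rfl⟩ } with hGdef
  have hGadj : ∀ a b : Fin n, G.Adj a b ↔ NAdj h k H a.val b.val := fun a b => Iff.rfl
  refine ⟨G, ?_, ?_, ?_⟩
  · -- Hamiltonian path
    intro i hi
    exact ham_adj hH1
  · -- (2k+1)-non-crossing
    have hedge : ∀ e ∈ G.edgeSet, ∃ i, i ≤ 2 * k ∧
        ∃ a b : Fin n, e = s(a, b) ∧ Cls h H i a.val b.val := by
      intro e
      induction e using Sym2.ind with
      | _ a b =>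
        intro he
        rw [SimpleGraph.mem_edgeSet] at he
        rcases lt_trichotomy a.val b.val with hlt | heq | hgt
        · obtain ⟨i, hi, hcls⟩ := adj_cls he hlt
          exact ⟨i, hi, a, b, rfl, hcls⟩
        · exact absurd (Fin.ext heq : a = b) (fun hE => (hE ▸ he).1 rfl)
        · obtain ⟨i, hi, hcls⟩ := adj_cls he.nsymm hgt
          exact ⟨i, hi, b, a, Sym2.eq_swap, hcls⟩
    let P : Sym2 (Fin n) → Prop := fun e => ∃ i, i ≤ 2 * k ∧
        ∃ a b : Fin n, e = s(a, b) ∧ Cls h H i a.val b.val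
    let idx : Sym2 (Fin n) → ℕ := fun e =>
      if he : ∃ i, i ≤ 2 * k ∧ ∃ a b : Fin n, e = s(a, b) ∧ Cls h H i a.val b.val
      then Nat.find he else 0
    have hidx : ∀ e ∈ G.edgeSet, idx e ≤ 2 * k ∧
        ∃ a b : Fin n, e = s(a, b) ∧ Cls h H (idx e) a.val b.val := by
      intro e he
      have hex := hedge e he
      simp only [idx, dif_pos hex]
      exact Nat.find_spec hex
    refine ⟨fun i => {e | e ∈ G.edgeSet ∧ idx e = i.val}, ?_, ?_, ?_⟩
    · ext e
      simp only [Set.mem_iUnion, Set.mem_setOf_eq]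
      constructor
      · rintro ⟨i, hei, _⟩; exact hei
      · intro he
        exact ⟨⟨idx e, by have := (hidx e he).1; omega⟩, he, rfl⟩
    · intro i j hij
      rw [Set.disjoint_left]
      rintro e ⟨he1, he2⟩ ⟨he3, he4⟩
      exact hij (Fin.ext (he2 ▸ he4 ▸ rfl))
    · intro i
      rintro ⟨a, b, c, d, hac, hcb, hbd, hab, hcd⟩
      obtain ⟨habE, habI⟩ := hab
      obtain ⟨hcdE, hcdI⟩ := hcd
      obtain ⟨_, a', b', heq1, hcls1⟩ := hidx _ habE
      obtain ⟨_, c', d', heq2, hcls2⟩ := hidx _ hcdE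
      rw [habI] at hcls1
      rw [hcdI] at hcls2
      have hab' : a' = a ∧ b' = b := by
        rw [Sym2.eq_iff] at heq1
        rcases heq1 with ⟨h1, h2⟩ | ⟨h1, h2⟩
        · exact ⟨h1.symm, h2.symm⟩
        · exfalso
          have hl := cls_lt hcls1
          rw [← h1, ← h2] at hl
          have hac2 : (a:ℕ) < (c:ℕ) := hac
          have hcb2 : (c:ℕ) < (b:ℕ) := hcb
          omega
      have hcd' : c' = c ∧ d' = d := by
        rw [Sym2.eq_iff] at heq2
        rcases heq2 with ⟨h1, h2⟩ | ⟨h1, h2⟩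
        · exact ⟨h1.symm, h2.symm⟩
        · exfalso
          have hl := cls_lt hcls2
          rw [← h1, ← h2] at hl
          have hcb2 : (c:ℕ) < (b:ℕ) := hcb
          have hbd2 : (b:ℕ) < (d:ℕ) := hbd
          omega
      rw [hab'.1, hab'.2] at hcls1
      rw [hcd'.1, hcd'.2] at hcls2
      exact cls_noncross hcls1 hcls2 hac hcb hbd
  · -- induced path bound
    intro s w hw
    set V : ℕ → ℕ := fun i => if hi : i < s then (w ⟨i, hi⟩).val else 0 with hV
    have hsb : s ≤ 4 * (h - 1) * (k + 1) + 3 := by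
      refine natBoundZ (V := V) hh2 (fun i j hi hj => ?_) (fun i j hi hj hEq => ?_) (fun i hi => ?_)
      · show NAdj h k (h * h ^ k) (V i) (V j) ↔ _
        rw [hV]
        simp only [dif_pos hi, dif_pos hj]
        exact hw.2 ⟨i, hi⟩ ⟨j, hj⟩
      · rw [hV] at hEq
        simp only [dif_pos hi, dif_pos hj] at hEq
        have := hw.1 (Fin.ext hEq)
        exact congrArg Fin.val this
      · rw [hV]
        simp only [dif_pos hi]
        exact (w ⟨i, hi⟩).isLt
    -- real arithmetic
    have hlogb : Real.logb 2 (n : ℝ) = (H : ℝ) := by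
      rw [hndef]
      push_cast
      rw [Real.logb_pow, Real.logb_self_eq_one (by norm_num : (1:ℝ) < 2)]
      ring
    have hHpow : (H : ℝ) = (h : ℝ) ^ ((k + 1 : ℕ)) := by
      rw [hHdef]
      push_cast
      rw [pow_succ]
      ring
    have hrpow : ((H : ℝ)) ^ ((1 : ℝ) / ((k : ℝ) + 1)) = (h : ℝ) := by
      rw [hHpow, ← Real.rpow_natCast ((h : ℝ)) (k + 1), ← Real.rpow_mul (by positivity)]
      have e : ((k + 1 : ℕ) : ℝ) * ((1 : ℝ) / ((k : ℝ) + 1)) = 1 := by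
        have : ((k : ℝ) + 1) ≠ 0 := by positivity
        push_cast
        field_simp
      rw [e, Real.rpow_one]
    rw [hlogb, hrpow]
    have hnat : s ≤ (4 * k + 7) * h := by
      obtain ⟨a, ha⟩ : ∃ a, h = a + 1 := ⟨h - 1, by omega⟩
      have e1 : 4 * ((a + 1) - 1) * (k + 1) + 3 = 4 * (a * k) + 4 * a + 3 := by
        simp only [Nat.add_sub_cancel]; ring
      have e2 : (4 * k + 7) * (a + 1) = 4 * (a * k) + 4 * k + 7 * a + 7 := by ring
      rw [ha] at hsb ⊢
      omega
    calc (s : ℝ) ≤ ((4 * k + 7) * h : ℕ) := by exact_mod_cast hnat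
      _ = (4 * k + 7 : ℝ) * (h : ℝ) := by push_cast; ring
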